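/- For every fixed bandwidth vector w' ∈ ℝ₊₊^{2K}, the function f'_{w'} : ℝ₊^{2K} → ℝ₊₊^{2K}, defined componentwise by f'_{w',l}(p) = (p_l/w'_l) · d_l / (W₀ B log₂(1 + p_l/I_l(p))) when p_l ≠ 0, and f'_{w',l}(p) = (d_l · ln 2 / (W₀ B w'_l)) · I_l(p) when p_l = 0, is a standard interference function: it is positive-valued, monotone (p ≤ p̃ componentwise implies f'_{w'}(p) ≤ f'_{w'}(p̃) componentwise), and scalable (for every α > 1 and every p ∈ ℝ₊^{2K}, α·f'_{w'}(p) > f'_{w'}(α·p) componentwise). -/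

import Mathlib

open Real Finset


/-- Interference at link `l` for a fixed bandwidth vector `w'`:
`I_l(p) = ((Ṽ · diag(w') · p)_l + σ²) / v_l`. -/
noncomputable def interfW {K : ℕ} (V : Matrix (Fin (2 * K)) (Fin (2 * K)) ℝ)
    (v : Fin (2 * K) → ℝ) (σ2 : ℝ) (w' p : Fin (2 * K) → ℝ) (l : Fin (2 * K)) : ℝ :=
  ((∑ j, V l j * (w' j * p j)) + σ2) / v l

/-- The function `f'_{w'}` of the paper, defined componentwise by
`(p_l / w'_l) · d_l / (W₀ B log₂(1 + p_l / I_l(p)))` when `p_l ≠ 0`, and by the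
continuous extension `(d_l ln 2 / (W₀ B w'_l)) · I_l(p)` when `p_l = 0`. -/
noncomputable def fPrimeW {K : ℕ} (V : Matrix (Fin (2 * K)) (Fin (2 * K)) ℝ)
    (v : Fin (2 * K) → ℝ) (σ2 W0 B : ℝ) (d : Fin (2 * K) → ℝ)
    (w' p : Fin (2 * K) → ℝ) (l : Fin (2 * K)) : ℝ :=
  if p l = 0 then
    d l * Real.log 2 / (W0 * B * w' l) * interfW V v σ2 w' p l
  else
    p l / w' l * (d l / (W0 * B * Real.logb 2 (1 + p l / interfW V v σ2 w' p l)))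

/-- auxiliary scalar function: `G x I = x·log 2 / log (1 + x/I)`, extended by `log 2 · I` at `x = 0`. -/
noncomputable def Gaux (x I : ℝ) : ℝ :=
  if x = 0 then Real.log 2 * I else x * Real.log 2 / Real.log (1 + x / I)

lemma log_one_add_le {t : ℝ} (ht : 0 ≤ t) : Real.log (1 + t) ≤ t := by
  have := Real.log_le_sub_one_of_pos (x := 1 + t) (by linarith)
  linarith

lemma log_one_add_pos {t : ℝ} (ht : 0 < t) : 0 < Real.log (1 + t) :=
  Real.log_pos (by linarith)

lemma concave_log_ineq {s t : ℝ} (hs : 0 < s) (hst : s ≤ t) :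
    s / t * Real.log (1 + t) ≤ Real.log (1 + s) := by
  have ht : 0 < t := lt_of_lt_of_le hs hst
  have hmu : 0 ≤ s / t := by positivity
  have hmu1 : s / t ≤ 1 := (div_le_one ht).2 hst
  have hlam : 0 ≤ 1 - s / t := by linarith
  have h := strictConcaveOn_log_Ioi.concaveOn.2 (x := 1) (y := 1 + t)
      (Set.mem_Ioi.2 one_pos) (Set.mem_Ioi.2 (by linarith)) hlam hmu (by ring)
  have hx : (1 - s / t) • (1 : ℝ) + (s / t) • (1 + t) = 1 + s := by
    have : s / t * t = s := div_mul_cancel₀ s (ne_of_gt ht)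
    simp [smul_eq_mul]; nlinarith
  rw [hx] at h
  simpa [smul_eq_mul, Real.log_one] using h

lemma Gaux_pos {x I : ℝ} (hx : 0 ≤ x) (hI : 0 < I) : 0 < Gaux x I := by
  unfold Gaux
  split
  · have := Real.log_pos (by norm_num : (1:ℝ) < 2)
    positivity
  · rename_i h
    have hx' : 0 < x := lt_of_le_of_ne hx (Ne.symm h)
    have hL : 0 < Real.log (1 + x / I) := log_one_add_pos (by positivity)
    have := Real.log_pos (by norm_num : (1:ℝ) < 2)
    positivity

lemma Gaux_mono_x {x1 x2 I : ℝ} (hx1 : 0 ≤ x1) (hx12 : x1 ≤ x2) (hI : 0 < I) :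
    Gaux x1 I ≤ Gaux x2 I := by
  have hlog2 : 0 < Real.log 2 := Real.log_pos (by norm_num)
  rcases eq_or_lt_of_le (hx1.trans hx12) with h2 | h2
  · -- x2 = 0, hence x1 = 0
    have hx1' : x1 = 0 := le_antisymm (hx12.trans h2.symm.le) hx1
    rw [hx1', ← h2]
  · rcases eq_or_lt_of_le hx1 with h1 | h1
    · -- x1 = 0 < x2
      have ht : 0 < x2 / I := by positivity
      have hL : 0 < Real.log (1 + x2 / I) := log_one_add_pos ht
      rw [Gaux, Gaux, if_pos h1.symm, if_neg (ne_of_gt h2)]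
      have hle : Real.log (1 + x2 / I) ≤ x2 / I := log_one_add_le ht.le
      have h3 : x2 * Real.log 2 / (x2 / I) ≤ x2 * Real.log 2 / Real.log (1 + x2 / I) := by
        gcongr
        all_goals positivity
      have h4 : x2 * Real.log 2 / (x2 / I) = Real.log 2 * I := by
        field_simp
      linarith [h4 ▸ h3]
    · -- 0 < x1 ≤ x2
      have hs : 0 < x1 / I := by positivity
      have ht : 0 < x2 / I := by positivity
      have hL1 : 0 < Real.log (1 + x1 / I) := log_one_add_pos hs
      have hL2 : 0 < Real.log (1 + x2 / I) := log_one_add_pos ht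
      rw [Gaux, Gaux, if_neg (ne_of_gt h1), if_neg (ne_of_gt h2)]
      rw [div_le_div_iff₀ hL1 hL2]
      have hkey : (x1 / I) / (x2 / I) * Real.log (1 + x2 / I) ≤ Real.log (1 + x1 / I) := by
        apply concave_log_ineq hs
        gcongr
      have hq : (x1 / I) / (x2 / I) = x1 / x2 := by
        field_simp
      rw [hq] at hkey
      have := mul_le_mul_of_nonneg_left hkey (le_of_lt h2)
      have hc : x2 * (x1 / x2 * Real.log (1 + x2 / I)) = x1 * Real.log (1 + x2 / I) := by
        field_simp
      nlinarith [hlog2]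

lemma Gaux_mono_I {x I1 I2 : ℝ} (hx : 0 ≤ x) (hI1 : 0 < I1) (hI : I1 ≤ I2) :
    Gaux x I1 ≤ Gaux x I2 := by
  have hlog2 : 0 < Real.log 2 := Real.log_pos (by norm_num)
  unfold Gaux
  split
  · nlinarith
  · rename_i h
    have hx' : 0 < x := lt_of_le_of_ne hx (Ne.symm h)
    have hI2 : 0 < I2 := lt_of_lt_of_le hI1 hI
    have h21 : x / I2 ≤ x / I1 := by gcongr
    have hL2 : 0 < Real.log (1 + x / I2) := log_one_add_pos (by positivity)
    have hL : Real.log (1 + x / I2) ≤ Real.log (1 + x / I1) := by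
      apply Real.log_le_log (by positivity)
      linarith
    gcongr
    all_goals positivity

lemma Gaux_strict_I {x I1 I2 : ℝ} (hx : 0 ≤ x) (hI1 : 0 < I1) (hI : I1 < I2) :
    Gaux x I1 < Gaux x I2 := by
  have hlog2 : 0 < Real.log 2 := Real.log_pos (by norm_num)
  unfold Gaux
  split
  · nlinarith
  · rename_i h
    have hx' : 0 < x := lt_of_le_of_ne hx (Ne.symm h)
    have hI2 : 0 < I2 := lt_trans hI1 hI
    have h21 : x / I2 < x / I1 := by gcongr
    have hL2 : 0 < Real.log (1 + x / I2) := log_one_add_pos (by positivity)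
    have hL : Real.log (1 + x / I2) < Real.log (1 + x / I1) := by
      apply Real.log_lt_log (by positivity)
      linarith
    gcongr
    all_goals positivity

lemma Gaux_homog {x I α : ℝ} (hα : 0 < α) : Gaux (α * x) (α * I) = α * Gaux x I := by
  unfold Gaux
  rcases eq_or_ne x 0 with h | h
  · simp [h, mul_comm, mul_assoc, mul_left_comm]
  · have h' : α * x ≠ 0 := mul_ne_zero (ne_of_gt hα) h
    rw [if_neg h', if_neg h]
    rw [mul_div_mul_left x I (ne_of_gt hα)]
    ring

lemma interfW_pos {K : ℕ} (V : Matrix (Fin (2 * K)) (Fin (2 * K)) ℝ) (hV : ∀ i j, 0 ≤ V i j)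
    (v : Fin (2 * K) → ℝ) (hv : ∀ i, 0 < v i) (σ2 : ℝ) (hσ2 : 0 < σ2)
    (w' : Fin (2 * K) → ℝ) (hw' : ∀ i, 0 < w' i)
    (p : Fin (2 * K) → ℝ) (hp : ∀ i, 0 ≤ p i) (l : Fin (2 * K)) :
    0 < interfW V v σ2 w' p l := by
  unfold interfW
  have hs : 0 ≤ ∑ j, V l j * (w' j * p j) :=
    Finset.sum_nonneg fun j _ => mul_nonneg (hV l j) (mul_nonneg (hw' j).le (hp j))
  have := hv l
  positivity

lemma interfW_mono {K : ℕ} (V : Matrix (Fin (2 * K)) (Fin (2 * K)) ℝ) (hV : ∀ i j, 0 ≤ V i j)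
    (v : Fin (2 * K) → ℝ) (hv : ∀ i, 0 < v i) (σ2 : ℝ)
    (w' : Fin (2 * K) → ℝ) (hw' : ∀ i, 0 < w' i)
    (p p2 : Fin (2 * K) → ℝ) (hp : p ≤ p2) (l : Fin (2 * K)) :
    interfW V v σ2 w' p l ≤ interfW V v σ2 w' p2 l := by
  unfold interfW
  have hs : ∑ j, V l j * (w' j * p j) ≤ ∑ j, V l j * (w' j * p2 j) := by
    apply Finset.sum_le_sum
    intro j _
    have := hp j
    have := hw' j
    have := hV l j
    exact mul_le_mul_of_nonneg_left (mul_le_mul_of_nonneg_left (hp j) (hw' j).le) (hV l j)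
  exact (div_le_div_iff_of_pos_right (hv l)).2 (by linarith)

lemma fPrimeW_eq {K : ℕ} (V : Matrix (Fin (2 * K)) (Fin (2 * K)) ℝ)
    (v : Fin (2 * K) → ℝ) (σ2 W0 B : ℝ) (d : Fin (2 * K) → ℝ)
    (w' p : Fin (2 * K) → ℝ) (l : Fin (2 * K)) :
    fPrimeW V v σ2 W0 B d w' p l
      = d l / (W0 * B * w' l) * Gaux (p l) (interfW V v σ2 w' p l) := by
  unfold fPrimeW Gaux
  split
  · ring
  · rw [Real.logb, show Real.log (1 + p l / interfW V v σ2 w' p l) / Real.log 2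
        = (Real.log 2)⁻¹ * Real.log (1 + p l / interfW V v σ2 w' p l) by ring]
    have h2 : Real.log 2 ≠ 0 := ne_of_gt (Real.log_pos (by norm_num))
    field_simp

lemma interfW_smul_lt {K : ℕ} (V : Matrix (Fin (2 * K)) (Fin (2 * K)) ℝ) (hV : ∀ i j, 0 ≤ V i j)
    (v : Fin (2 * K) → ℝ) (hv : ∀ i, 0 < v i) (σ2 : ℝ) (hσ2 : 0 < σ2)
    (w' : Fin (2 * K) → ℝ) (p : Fin (2 * K) → ℝ) {α : ℝ} (hα : 1 < α) (l : Fin (2 * K)) :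
    interfW V v σ2 w' (α • p) l < α * interfW V v σ2 w' p l := by
  unfold interfW
  have hsum : ∑ j, V l j * (w' j * (α • p) j) = α * ∑ j, V l j * (w' j * p j) := by
    rw [Finset.mul_sum]
    exact Finset.sum_congr rfl fun j _ => by simp [smul_eq_mul]; ring
  rw [hsum, ← mul_div_assoc]
  exact (div_lt_div_iff_of_pos_right (hv l)).2 (by nlinarith)

/-- Lemma 2 of the paper: For every fixed positive bandwidth vector
`w'`, the function `p ↦ f'_{w'}(p)` is a standard interference function:
positive-valued, monotone, and scalable on the nonnegative orthant. -/
theorem fPrimeW_is_sif (K : ℕ) (hK : 1 ≤ K)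
    (V : Matrix (Fin (2 * K)) (Fin (2 * K)) ℝ) (hV : ∀ i j, 0 ≤ V i j)
    (v : Fin (2 * K) → ℝ) (hv : ∀ i, 0 < v i)
    (σ2 : ℝ) (hσ2 : 0 < σ2) (W0 B : ℝ) (hW0 : 0 < W0) (hB : 0 < B)
    (d : Fin (2 * K) → ℝ) (hd : ∀ i, 0 < d i)
    (w' : Fin (2 * K) → ℝ) (hw' : ∀ i, 0 < w' i) :
    (∀ p : Fin (2 * K) → ℝ, (∀ i, 0 ≤ p i) →
      ∀ l, 0 < fPrimeW V v σ2 W0 B d w' p l) ∧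
    (∀ p p2 : Fin (2 * K) → ℝ, (∀ i, 0 ≤ p i) → p ≤ p2 →
      ∀ l, fPrimeW V v σ2 W0 B d w' p l ≤ fPrimeW V v σ2 W0 B d w' p2 l) ∧
    (∀ α : ℝ, 1 < α → ∀ p : Fin (2 * K) → ℝ, (∀ i, 0 ≤ p i) →
      ∀ l, fPrimeW V v σ2 W0 B d w' (α • p) l < α * fPrimeW V v σ2 W0 B d w' p l) := by
  have hc : ∀ l, 0 < d l / (W0 * B * w' l) := fun l => by
    have := hd l; have := hw' l; positivity
  refine ⟨?_, ?_, ?_⟩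
  · intro p hp l
    rw [fPrimeW_eq]
    exact mul_pos (hc l)
      (Gaux_pos (hp l) (interfW_pos V hV v hv σ2 hσ2 w' hw' p hp l))
  · intro p p2 hp hle l
    rw [fPrimeW_eq, fPrimeW_eq]
    apply mul_le_mul_of_nonneg_left _ (hc l).le
    calc Gaux (p l) (interfW V v σ2 w' p l)
        ≤ Gaux (p2 l) (interfW V v σ2 w' p l) :=
          Gaux_mono_x (hp l) (hle l) (interfW_pos V hV v hv σ2 hσ2 w' hw' p hp l)
      _ ≤ Gaux (p2 l) (interfW V v σ2 w' p2 l) :=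
          Gaux_mono_I ((hp l).trans (hle l))
            (interfW_pos V hV v hv σ2 hσ2 w' hw' p hp l)
            (interfW_mono V hV v hv σ2 w' hw' p p2 hle l)
  · intro α hα p hp l
    rw [fPrimeW_eq, fPrimeW_eq]
    have hα0 : 0 < α := lt_trans one_pos hα
    have hIp : 0 < interfW V v σ2 w' p l := interfW_pos V hV v hv σ2 hσ2 w' hw' p hp l
    have hIαp : 0 < interfW V v σ2 w' (α • p) l :=
      interfW_pos V hV v hv σ2 hσ2 w' hw' (α • p) (fun i => by
        simpa [smul_eq_mul] using mul_nonneg hα0.le (hp i)) l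
    have h1 : Gaux ((α • p) l) (interfW V v σ2 w' (α • p) l)
        < Gaux ((α • p) l) (α * interfW V v σ2 w' p l) :=
      Gaux_strict_I (by simpa [smul_eq_mul] using mul_nonneg hα0.le (hp l)) hIαp
        (interfW_smul_lt V hV v hv σ2 hσ2 w' p hα l)
    have h2 : Gaux ((α • p) l) (α * interfW V v σ2 w' p l)
        = α * Gaux (p l) (interfW V v σ2 w' p l) := by
      have : (α • p) l = α * p l := by simp [smul_eq_mul]
      rw [this]
      exact Gaux_homog hα0
    rw [h2] at h1
    calc d l / (W0 * B * w' l) * Gaux ((α • p) l) (interfW V v σ2 w' (α • p) l)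
        < d l / (W0 * B * w' l) * (α * Gaux (p l) (interfW V v σ2 w' p l)) :=
          mul_lt_mul_of_pos_left h1 (hc l)
      _ = α * (d l / (W0 * B * w' l) * Gaux (p l) (interfW V v σ2 w' p l)) := by ring
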